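/- arXiv:2404.10844 — 7 statements merged into one kernel-verified Lean document; each statement's English description precedes it below -/
import Mathlib

section
/- Let A ∈ ℝ^{n×n} be positive definite and v ∈ ℝ^{n×p} have full column rank. Then rank(A − A v (vᵀ A v)⁻¹ vᵀ A) = n − p. -/
open Matrix

lemma aux_vinj {n p : ℕ} (v : Matrix (Fin n) (Fin p) ℝ) (hv : v.rank = p) :
    Function.Injective v.mulVecLin := by
  rw [← LinearMap.ker_eq_bot]
  have h := LinearMap.finrank_range_add_finrank_ker v.mulVecLin
  rw [Module.finrank_fin_fun] at h
  have hr : Module.finrank ℝ (LinearMap.range v.mulVecLin) = p := hv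
  have h0 : Module.finrank ℝ (LinearMap.ker v.mulVecLin) = 0 := by omega
  exact Submodule.finrank_eq_zero.mp h0

/-- `rank(A − A v (vᵀ A v)⁻¹ vᵀ A) = n − p`. -/
theorem orthogonal_component_rank
    {n p : ℕ} (A : Matrix (Fin n) (Fin n) ℝ) (hA : A.PosDef)
    (v : Matrix (Fin n) (Fin p) ℝ) (hv : v.rank = p) :
    (A - A * v * (vᵀ * A * v)⁻¹ * vᵀ * A).rank = n - p := by
  have hvinj := aux_vinj v hv
  have hvT : vᵀ = vᴴ := by
    ext i j
    simp [Matrix.conjTranspose]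
  set M : Matrix (Fin p) (Fin p) ℝ := vᵀ * A * v with hMdef
  -- M is positive definite
  have hM : M.PosDef := by
    rw [hMdef, hvT]
    refine PosDef.of_dotProduct_mulVec_pos (isHermitian_conjTranspose_mul_mul _ hA.1) fun x hx => ?_
    have hvx : v *ᵥ x ≠ 0 := by
      intro h0
      exact hx (hvinj (by simpa [Matrix.mulVecLin_apply] using h0))
    have h1 := hA.dotProduct_mulVec_pos hvx
    simpa only [star_mulVec, dotProduct_mulVec, vecMul_vecMul] using h1
  have hdet : IsUnit M.det := (Matrix.isUnit_iff_isUnit_det M).mp hM.isUnit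
  have hMinv : M⁻¹ * M = 1 := Matrix.nonsing_inv_mul M hdet
  set B : Matrix (Fin n) (Fin n) ℝ := A - A * v * M⁻¹ * vᵀ * A with hBdef
  have hAinj : Function.Injective (A.mulVec) :=
    Matrix.mulVec_injective_iff_isUnit.mpr hA.isUnit
  -- B * v = 0
  have hBv : B * v = 0 := by
    rw [hBdef, Matrix.sub_mul]
    have : A * v * M⁻¹ * vᵀ * A * v = A * v * (M⁻¹ * M) := by
      rw [hMdef]; simp only [Matrix.mul_assoc]
    rw [this, hMinv, Matrix.mul_one, sub_self]
  -- kernel of B equals range of v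
  have hker : LinearMap.ker B.mulVecLin = LinearMap.range v.mulVecLin := by
    ext x
    simp only [LinearMap.mem_ker, LinearMap.mem_range, Matrix.mulVecLin_apply]
    constructor
    · intro hx
      refine ⟨(M⁻¹ * vᵀ * A) *ᵥ x, ?_⟩
      apply hAinj
      have hx' : A *ᵥ x - (A * v * M⁻¹ * vᵀ * A) *ᵥ x = 0 := by
        rw [← Matrix.sub_mulVec, ← hBdef, hx]
      show A *ᵥ (v *ᵥ ((M⁻¹ * vᵀ * A) *ᵥ x)) = A *ᵥ x
      rw [Matrix.mulVec_mulVec, Matrix.mulVec_mulVec, sub_eq_zero.mp hx']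
      simp only [Matrix.mul_assoc]
    · rintro ⟨y, rfl⟩
      rw [Matrix.mulVec_mulVec, hBv, Matrix.zero_mulVec]
  -- rank-nullity
  have hrn := LinearMap.finrank_range_add_finrank_ker B.mulVecLin
  rw [Module.finrank_fin_fun, hker] at hrn
  have hrv : Module.finrank ℝ (LinearMap.range v.mulVecLin) = p := hv
  have : B.rank = Module.finrank ℝ (LinearMap.range B.mulVecLin) := rfl
  omega
end

section
/- Let S ⊆ ℝⁿ be a p-dimensional subspace and A ∈ ℝ^{n×n} positive definite. If a matrix Ã ∈ ℝ^{n×n} is symmetric, has rank p, and satisfies Ã x = A x for all x ∈ S, then Ã = A^{∥S} := A v (vᵀ A v)⁻¹ vᵀ A, where the columns of v form a basis of S. -/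
open Matrix

/-- Uniqueness of `A^{∥S}`: if `Ã` is symmetric, has rank `p`, and agrees with `A` on `S`,
then `Ã = A v (vᵀ A v)⁻¹ vᵀ A`. -/
theorem parallel_component_unique
    {n p : ℕ} (A : Matrix (Fin n) (Fin n) ℝ) (hA : A.PosDef)
    (v : Matrix (Fin n) (Fin p) ℝ) (hv : v.rank = p)
    (At : Matrix (Fin n) (Fin n) ℝ)
    (hsymm : Atᵀ = At) (hrank : At.rank = p)
    (hagree : ∀ c : Fin p → ℝ, At *ᵥ (v *ᵥ c) = A *ᵥ (v *ᵥ c)) :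
    At = A * v * (vᵀ * A * v)⁻¹ * vᵀ * A := by
  classical
  -- v has injective mulVec
  have hker : LinearMap.ker v.mulVecLin = ⊥ := by
    have h1 := v.mulVecLin.finrank_range_add_finrank_ker
    rw [Module.finrank_pi, Fintype.card_fin] at h1
    have h2 : Module.finrank ℝ (LinearMap.range v.mulVecLin) = p := hv
    rw [h2] at h1
    have : Module.finrank ℝ (LinearMap.ker v.mulVecLin) = 0 := by omega
    exact Submodule.finrank_eq_zero.mp this
  have hvinj : Function.Injective v.mulVec := by
    have := LinearMap.ker_eq_bot.mp hker
    intro a b h; apply this; simpa only [Matrix.mulVecLin_apply] using h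
  -- G := vᵀ A v is positive definite, hence invertible
  have hG : (vᵀ * A * v).PosDef := by
    rw [Matrix.posDef_iff_dotProduct_mulVec]
    refine ⟨?_, fun x hx => ?_⟩
    · have h := isHermitian_conjTranspose_mul_mul v hA.1
      have hc : vᴴ = vᵀ := rfl
      rwa [hc] at h
    · have hvx : v *ᵥ x ≠ 0 := by
        intro h
        apply hx
        apply hvinj
        rw [h, Matrix.mulVec_zero]
      have := hA.dotProduct_mulVec_pos hvx
      have hrw : dotProduct (star x) ((vᵀ * A * v) *ᵥ x)
          = dotProduct (star (v *ᵥ x)) (A *ᵥ (v *ᵥ x)) := by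
        have hs : (star x : Fin p → ℝ) = x := rfl
        have hs2 : (star (v *ᵥ x) : Fin n → ℝ) = v *ᵥ x := rfl
        rw [hs, hs2, ← Matrix.mulVec_mulVec, ← Matrix.mulVec_mulVec,
          Matrix.dotProduct_mulVec x vᵀ, Matrix.vecMul_transpose]
      rw [hrw]; exact this
  have hGu : IsUnit (vᵀ * A * v).det := hG.det_pos.ne'.isUnit
  have hAu : IsUnit A.det := hA.det_pos.ne'.isUnit
  -- rank of A*v is p
  have hAvrank : (A * v).rank = p := by
    rw [Matrix.rank_mul_eq_right_of_isUnit_det A v hAu, hv]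
  -- range of (A*v) ≤ range of At
  have hle : LinearMap.range (A * v).mulVecLin ≤ LinearMap.range At.mulVecLin := by
    rintro y ⟨c, rfl⟩
    refine ⟨v *ᵥ c, ?_⟩
    simp only [Matrix.mulVecLin_apply]
    rw [hagree c, Matrix.mulVec_mulVec]
  have hrange : LinearMap.range (A * v).mulVecLin = LinearMap.range At.mulVecLin := by
    apply Submodule.eq_of_le_of_finrank_le hle
    show Module.finrank ℝ (LinearMap.range At.mulVecLin)
        ≤ Module.finrank ℝ (LinearMap.range (A * v).mulVecLin)
    have h1 : Module.finrank ℝ (LinearMap.range At.mulVecLin) = p := hrank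
    have h2 : Module.finrank ℝ (LinearMap.range (A * v).mulVecLin) = p := hAvrank
    rw [h1, h2]
  -- extract C with At = (A*v) * C
  have hcol : ∀ j : Fin n, ∃ c : Fin p → ℝ, (A * v) *ᵥ c = At *ᵥ Pi.single j 1 := by
    intro j
    have : At *ᵥ Pi.single j 1 ∈ LinearMap.range (A * v).mulVecLin := by
      rw [hrange]; exact ⟨Pi.single j 1, rfl⟩
    obtain ⟨c, hc⟩ := this
    exact ⟨c, hc⟩
  choose Cf hCf using hcol
  set C : Matrix (Fin p) (Fin n) ℝ := Matrix.of (fun i j => Cf j i) with hCdef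
  have hAtC : At = (A * v) * C := by
    ext i j
    have := congrFun (hCf j) i
    simp only [Matrix.mulVec, Matrix.mul_apply, dotProduct, Pi.single_apply,
      mul_ite, mul_one, mul_zero, Finset.sum_ite_eq', Finset.mem_univ, if_true] at this ⊢
    rw [← this]
    rfl
  -- injectivity of (A*v) mulVec
  have hAvinj : Function.Injective (A * v).mulVec := by
    intro x y hxy
    apply hvinj
    apply Matrix.mulVec_injective_iff_isUnit.mpr ((Matrix.isUnit_iff_isUnit_det A).mpr hAu)
    rw [← Matrix.mulVec_mulVec, ← Matrix.mulVec_mulVec] at hxy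
    exact hxy
  -- cancellation
  have hcancel : ∀ X Y : Matrix (Fin p) (Fin p) ℝ, (A * v) * X = (A * v) * Y → X = Y := by
    intro X Y hXY
    ext i j
    have hc : X *ᵥ Pi.single j 1 = Y *ᵥ Pi.single j 1 := by
      apply hAvinj
      rw [Matrix.mulVec_mulVec, Matrix.mulVec_mulVec, hXY]
    have := congrFun hc i
    simpa [Matrix.mulVec, dotProduct, Pi.single_apply, mul_ite] using this
  -- At * v = A * v
  have hAtv : At * v = A * v := by
    ext i j
    have := congrFun (hagree (Pi.single j 1)) i
    simp only [Matrix.mulVec_mulVec] at this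
    simpa [Matrix.mulVec, Matrix.mul_apply, dotProduct, Pi.single_apply, mul_ite] using this
  -- C * v = 1
  have hCv : C * v = 1 := by
    apply hcancel
    rw [← Matrix.mul_assoc, ← hAtC, hAtv, Matrix.mul_one]
  -- symmetry gives  (vᵀ A v) * C = vᵀ A
  have hsym2 : Cᵀ * vᵀ * A = (A * v) * C := by
    have h1 := hsymm
    rw [hAtC] at h1
    rw [← h1]
    have hAt' : Aᵀ = A := hA.1
    rw [Matrix.transpose_mul, Matrix.transpose_mul, hAt', Matrix.mul_assoc]
  have hGC : (vᵀ * A * v) * C = vᵀ * A := by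
    have := congrArg (fun M => vᵀ * M) hsym2
    simp only [← Matrix.mul_assoc] at this
    have hvC : vᵀ * Cᵀ = 1 := by
      have := congrArg Matrix.transpose hCv
      rwa [Matrix.transpose_mul, Matrix.transpose_one] at this
    rw [hvC, Matrix.one_mul] at this
    exact this.symm
  have hC : C = (vᵀ * A * v)⁻¹ * (vᵀ * A) := by
    have := congrArg (fun M => (vᵀ * A * v)⁻¹ * M) hGC
    rwa [← Matrix.mul_assoc, Matrix.nonsing_inv_mul _ hGu, Matrix.one_mul] at this
  rw [hAtC, hC]
  rw [Matrix.mul_assoc (A * v), ← Matrix.mul_assoc, ← Matrix.mul_assoc, ← Matrix.mul_assoc]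
end

section
/- Let R ∈ ℝ^{n×n} be positive definite, λ ∈ (0,1), and φ̄ ∈ ℝ^{q×n} have full row rank q. Then R̄ := R − (1−λ) R φ̄ᵀ (φ̄ R φ̄ᵀ)⁻¹ φ̄ R is positive definite, and R̄ ⪰ λ R. -/
open Matrix

private lemma posDef_smul {n : ℕ} {c : ℝ} (hc : 0 < c) {M : Matrix (Fin n) (Fin n) ℝ}
    (hM : M.PosDef) : (c • M).PosDef := by
  refine PosDef.of_dotProduct_mulVec_pos ?_ fun x hx => ?_
  · rw [IsHermitian, conjTranspose_smul, star_trivial, hM.1.eq]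
  · rw [smul_mulVec, dotProduct_smul, smul_eq_mul]
    exact mul_pos hc (hM.dotProduct_mulVec_pos hx)

private lemma posSemidef_smul {n : ℕ} {c : ℝ} (hc : 0 ≤ c) {M : Matrix (Fin n) (Fin n) ℝ}
    (hM : M.PosSemidef) : (c • M).PosSemidef := by
  refine PosSemidef.of_dotProduct_mulVec_nonneg ?_ fun x => ?_
  · rw [IsHermitian, conjTranspose_smul, star_trivial, hM.1.eq]
  · rw [smul_mulVec, dotProduct_smul, smul_eq_mul]
    exact mul_nonneg hc (hM.dotProduct_mulVec_nonneg x)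

private lemma mulVec_transpose_ne_zero {n q : ℕ} (φ : Matrix (Fin q) (Fin n) ℝ)
    (hφ : φ.rank = q) {x : Fin q → ℝ} (hx : x ≠ 0) : φᵀ *ᵥ x ≠ 0 := by
  have hrank : φᵀ.rank = q := by rw [Matrix.rank_transpose]; exact hφ
  have hrn := LinearMap.finrank_range_add_finrank_ker (φᵀ.mulVecLin)
  rw [show Module.finrank ℝ (LinearMap.range φᵀ.mulVecLin) = q from hrank] at hrn
  simp only [Module.finrank_pi, Fintype.card_fin] at hrn
  have hker : LinearMap.ker φᵀ.mulVecLin = ⊥ := by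
    rw [← Submodule.finrank_eq_zero (R := ℝ)]
    omega
  intro h
  have hz : φᵀ.mulVecLin x = φᵀ.mulVecLin 0 := by
    rw [Matrix.mulVecLin_apply, h, map_zero]
  exact hx ((LinearMap.ker_eq_bot.mp hker) hz)

private lemma sandwich_posDef {n q : ℕ} (R : Matrix (Fin n) (Fin n) ℝ) (hR : R.PosDef)
    (φ : Matrix (Fin q) (Fin n) ℝ) (hφ : φ.rank = q) : (φ * R * φᵀ).PosDef := by
  have hsd : (φ * R * φᴴ).PosSemidef := hR.posSemidef.mul_mul_conjTranspose_same φ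
  rw [conjTranspose_eq_transpose_of_trivial] at hsd
  refine PosDef.of_dotProduct_mulVec_pos hsd.1 fun x hx => ?_
  have hy := mulVec_transpose_ne_zero φ hφ hx
  have : (φ * R * φᵀ) *ᵥ x = φ *ᵥ (R *ᵥ (φᵀ *ᵥ x)) := by
    simp [mulVec_mulVec, Matrix.mul_assoc]
  rw [this, dotProduct_mulVec (star x) φ, star_trivial,
    show x ᵥ* φ = φᵀ *ᵥ x from (Matrix.mulVec_transpose φ x).symm]
  have := hR.dotProduct_mulVec_pos hy
  rwa [star_trivial] at this

/-- The SIFted information matrix `R̄ = R − (1−λ) R φ̄ᵀ (φ̄ R φ̄ᵀ)⁻¹ φ̄ R` is positive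
definite and satisfies `R̄ ⪰ λ R`. -/
theorem sifted_information_posDef
    {n q : ℕ} (lam : ℝ) (hlam : lam ∈ Set.Ioo (0:ℝ) 1)
    (R : Matrix (Fin n) (Fin n) ℝ) (hR : R.PosDef)
    (φ : Matrix (Fin q) (Fin n) ℝ) (hφ : φ.rank = q) :
    (R - (1 - lam) • (R * φᵀ * (φ * R * φᵀ)⁻¹ * φ * R)).PosDef ∧
    ((R - (1 - lam) • (R * φᵀ * (φ * R * φᵀ)⁻¹ * φ * R)) - lam • R).PosSemidef := by
  obtain ⟨hl0, hl1⟩ := hlam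
  set S := φ * R * φᵀ with hS
  have hSpd : S.PosDef := sandwich_posDef R hR φ hφ
  haveI : Invertible S := hSpd.isUnit.invertible
  -- block matrix is PSD
  have hblock : (fromBlocks S (φ * R) (φ * R)ᴴ R).PosSemidef := by
    have h := hR.posSemidef.mul_mul_conjTranspose_same (fromRows φ (1 : Matrix (Fin n) (Fin n) ℝ))
    have heq : fromRows φ (1 : Matrix (Fin n) (Fin n) ℝ) * R *
        (fromRows φ (1 : Matrix (Fin n) (Fin n) ℝ))ᴴ =
        fromBlocks S (φ * R) (φ * R)ᴴ R := by
      rw [conjTranspose_fromRows_eq_fromCols_conjTranspose, fromRows_mul,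
        fromRows_mul_fromCols]
      have hRt : Rᵀ = R := by
        rw [← conjTranspose_eq_transpose_of_trivial]; exact hR.1.eq
      congr 1 <;>
        simp [hS, Matrix.mul_assoc, conjTranspose_eq_transpose_of_trivial,
          Matrix.transpose_mul, hRt]
    rwa [heq] at h
  have hschur : (R - (φ * R)ᴴ * S⁻¹ * (φ * R)).PosSemidef :=
    (PosDef.fromBlocks₁₁ (φ * R) R hSpd).mp hblock
  have hPeq : (φ * R)ᴴ * S⁻¹ * (φ * R) = R * φᵀ * S⁻¹ * φ * R := by
    have hRt : Rᵀ = R := by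
      rw [← conjTranspose_eq_transpose_of_trivial]; exact hR.1.eq
    rw [conjTranspose_eq_transpose_of_trivial, Matrix.transpose_mul, hRt]
    simp [Matrix.mul_assoc]
  rw [hPeq] at hschur
  set P := R * φᵀ * S⁻¹ * φ * R with hP
  have hdecomp : R - (1 - lam) • P = lam • R + (1 - lam) • (R - P) := by
    rw [smul_sub, ← add_sub_assoc, ← add_smul]
    ring_nf
    rw [one_smul]
  have hsmul : ((1 - lam) • (R - P)).PosSemidef := posSemidef_smul (by linarith) hschur
  constructor
  · rw [hdecomp]
    exact (posDef_smul hl0 hR).add_posSemidef hsmul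
  · have : R - (1 - lam) • P - lam • R = (1 - lam) • (R - P) := by
      rw [hdecomp]; abel
    rw [this]
    exact hsmul
end

section
/- Let R ∈ ℝ^{n×n} be positive definite, λ ∈ (0,1), and φ̄ ∈ ℝ^{q×n} have full row rank. Then (R − (1−λ) R φ̄ᵀ (φ̄ R φ̄ᵀ)⁻¹ φ̄ R)⁻¹ = R⁻¹ + ((1−λ)/λ) φ̄ᵀ (φ̄ R φ̄ᵀ)⁻¹ φ̄. -/
open Matrix

lemma rows_linearIndependent_of_rank {q n : ℕ} (φ : Matrix (Fin q) (Fin n) ℝ)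
    (hφ : φ.rank = q) : LinearIndependent ℝ (fun i => φ i) := by
  rw [Matrix.rank_eq_finrank_span_row] at hφ
  exact linearIndependent_iff_card_eq_finrank_span.mpr (by simp only [Fintype.card_fin, Set.finrank]; exact hφ.symm)

/-- Matrix inversion lemma form of the SIFted covariance matrix:
`(R − (1−λ) R φ̄ᵀ (φ̄ R φ̄ᵀ)⁻¹ φ̄ R)⁻¹ = R⁻¹ + ((1−λ)/λ) φ̄ᵀ (φ̄ R φ̄ᵀ)⁻¹ φ̄`. -/
theorem sifted_covariance_inverse
    {n q : ℕ} (lam : ℝ) (hlam : lam ∈ Set.Ioo (0:ℝ) 1)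
    (R : Matrix (Fin n) (Fin n) ℝ) (hR : R.PosDef)
    (φ : Matrix (Fin q) (Fin n) ℝ) (hφ : φ.rank = q) :
    (R - (1 - lam) • (R * φᵀ * (φ * R * φᵀ)⁻¹ * φ * R))⁻¹
      = R⁻¹ + ((1 - lam) / lam) • (φᵀ * (φ * R * φᵀ)⁻¹ * φ) := by
  obtain ⟨hlam0, hlam1⟩ := hlam
  have hvm : Function.Injective φ.vecMul :=
    Matrix.vecMul_injective_iff.mpr (rows_linearIndependent_of_rank φ hφ)
  -- S := φ R φᵀ is positive definite
  have hS : (φ * R * φᵀ).PosDef := by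
    refine Matrix.PosDef.of_dotProduct_mulVec_pos ?_ ?_
    · have := Matrix.isHermitian_mul_mul_conjTranspose φ hR.isHermitian
      simpa [Matrix.conjTranspose_eq_transpose_of_trivial] using this
    · intro x hx
      have hy : x ᵥ* φ ≠ 0 := fun h => hx (hvm (by simpa using h))
      have h0 := hR.dotProduct_mulVec_pos hy
      have e : x ᵥ* (φ * R) ⬝ᵥ (x ᵥ* φ) = x ᵥ* (φ * R * φᵀ) ⬝ᵥ x := by
        conv_rhs => rw [← Matrix.vecMul_vecMul, ← Matrix.dotProduct_mulVec,
          Matrix.mulVec_transpose]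
      simpa [Matrix.dotProduct_mulVec, Matrix.vecMul_vecMul, e] using h0
  have hSd : IsUnit (φ * R * φᵀ).det := (Matrix.isUnit_iff_isUnit_det _).mp hS.isUnit
  have hS1 : (φ * R * φᵀ) * (φ * R * φᵀ)⁻¹ = 1 := Matrix.mul_nonsing_inv _ hSd
  have hS2 : (φ * R * φᵀ)⁻¹ * (φ * R * φᵀ) = 1 := Matrix.nonsing_inv_mul _ hSd
  have hRd : IsUnit R.det := (Matrix.isUnit_iff_isUnit_det _).mp hR.isUnit
  have hR1 : R * R⁻¹ = 1 := Matrix.mul_nonsing_inv _ hRd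
  set S := φ * R * φᵀ with hSdef
  apply Matrix.inv_eq_right_inv
  have key2 : R * φᵀ * S⁻¹ * φ * R * R⁻¹ = R * (φᵀ * S⁻¹ * φ) := by
    rw [Matrix.mul_assoc (R * φᵀ * S⁻¹ * φ) R R⁻¹, hR1, Matrix.mul_one,
      Matrix.mul_assoc R φᵀ S⁻¹, Matrix.mul_assoc R (φᵀ * S⁻¹) φ]
  have h2 : φ * (R * (φᵀ * (S⁻¹ * φ))) = S * (S⁻¹ * φ) := by
    rw [hSdef]; simp [Matrix.mul_assoc]
  have key : R * φᵀ * S⁻¹ * φ * R * (φᵀ * S⁻¹ * φ) = R * (φᵀ * S⁻¹ * φ) := by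
    simp only [Matrix.mul_assoc]
    rw [h2, ← Matrix.mul_assoc S⁻¹ S, hS2, Matrix.one_mul]
  rw [Matrix.sub_mul, Matrix.mul_add, Matrix.mul_add, hR1, Matrix.smul_mul,
    Matrix.smul_mul, Matrix.mul_smul, Matrix.mul_smul, key2, key, smul_smul]
  rw [← add_smul, add_sub_assoc, ← sub_smul,
    show (1 - lam) / lam - ((1 - lam) + (1 - lam) * ((1 - lam) / lam)) = 0 from by
      field_simp; ring,
    zero_smul, add_zero]
end

section
/- Let R ∈ ℝ^{n×n} be positive definite and φ̄ ∈ ℝ^{q×n} have full row rank q. Then every nonzero eigenvalue of R^{⊥} := R − R φ̄ᵀ (φ̄ R φ̄ᵀ)⁻¹ φ̄ R lies in the interval [λ_min(R), λ_max(R)], and R^{⊥} has exactly n − q nonzero eigenvalues. -/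
open Matrix
open Module
open scoped MatrixOrder


private lemma dot1 {m n : Type*} [Fintype m] [Fintype n] (A : Matrix m n ℝ) (v : m → ℝ)
    (w : n → ℝ) : v ⬝ᵥ (A *ᵥ w) = (Aᵀ *ᵥ v) ⬝ᵥ w := by
  rw [Matrix.dotProduct_mulVec, Matrix.mulVec_transpose]

private lemma dot2 {m n p : Type*} [Fintype m] [Fintype n] [Fintype p]
    (A : Matrix m n ℝ) (B : Matrix m p ℝ) (v : n → ℝ) (w : p → ℝ) :
    (A *ᵥ v) ⬝ᵥ (B *ᵥ w) = v ⬝ᵥ ((Aᵀ * B) *ᵥ w) := by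
  calc (A *ᵥ v) ⬝ᵥ (B *ᵥ w) = (Aᵀᵀ *ᵥ v) ⬝ᵥ (B *ᵥ w) := by rw [transpose_transpose]
    _ = v ⬝ᵥ (Aᵀ *ᵥ (B *ᵥ w)) := (dot1 _ _ _).symm
    _ = v ⬝ᵥ ((Aᵀ * B) *ᵥ w) := by rw [mulVec_mulVec]

private lemma dot_self_nonneg {n : Type*} [Fintype n] (v : n → ℝ) : 0 ≤ v ⬝ᵥ v :=
  Finset.sum_nonneg fun _ _ => mul_self_nonneg _

private lemma rank_add_le_aux {m n : ℕ} (A B : Matrix (Fin m) (Fin n) ℝ) :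
    (A + B).rank ≤ A.rank + B.rank := by
  have hle : LinearMap.range (A + B).mulVecLin ≤
      LinearMap.range A.mulVecLin ⊔ LinearMap.range B.mulVecLin := by
    rw [Matrix.mulVecLin_add]
    rintro x ⟨v, rfl⟩
    exact Submodule.mem_sup.2 ⟨_, ⟨v, rfl⟩, _, ⟨v, rfl⟩, rfl⟩
  exact (Submodule.finrank_mono hle).trans
    (Submodule.finrank_add_le_finrank_add_finrank _ _)

private lemma specvec {n : ℕ} (M : Matrix (Fin n) (Fin n) ℝ) (μ : ℝ) (h : μ ∈ spectrum ℝ M) :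
    ∃ v, v ≠ 0 ∧ M *ᵥ v = μ • v := by
  rw [spectrum.mem_iff] at h
  have hdet : (μ • (1 : Matrix (Fin n) (Fin n) ℝ) - M).det = 0 := by
    by_contra hd
    exact h (by
      rw [Matrix.isUnit_iff_isUnit_det]
      simpa [Algebra.algebraMap_eq_smul_one] using isUnit_iff_ne_zero.2 hd)
  obtain ⟨v, hv, hv0⟩ := (Matrix.exists_mulVec_eq_zero_iff).2 hdet
  refine ⟨v, hv, ?_⟩
  rw [Matrix.sub_mulVec, Matrix.smul_mulVec, Matrix.one_mulVec, sub_eq_zero] at hv0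
  exact hv0.symm

private theorem aux_main {n : ℕ} (S P R : Matrix (Fin n) (Fin n) ℝ)
    (hSsym : Sᵀ = S) (hSdet : IsUnit S.det) (hSS : S * S = R)
    (hPsym : Pᵀ = P) (hPP : P * P = P) :
    (S * ((1 - P) * S)).rank = n - P.rank ∧
    ∀ a b : ℝ,
      (R - a • (1 : Matrix (Fin n) (Fin n) ℝ)).PosSemidef →
      (b • (1 : Matrix (Fin n) (Fin n) ℝ) - R).PosSemidef →
      ∀ μ ∈ spectrum ℝ (S * ((1 - P) * S)), μ ≠ 0 → a ≤ μ ∧ μ ≤ b := by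
  have hQsym : (1 - P)ᵀ = 1 - P := by rw [transpose_sub, transpose_one, hPsym]
  have hQQ : (1 - P) * (1 - P) = 1 - P := by
    simp [sub_mul, mul_sub, hPP]
  constructor
  · -- rank
    rw [rank_mul_eq_right_of_isUnit_det S _ hSdet, rank_mul_eq_left_of_isUnit_det S _ hSdet]
    have h1 : P.rank + (1 - P).rank ≤ n := by
      have := Matrix.rank_add_rank_le_card_of_mul_eq_zero
        (show P * (1 - P) = 0 by simp [mul_sub, hPP])
      simpa using this
    have h2 : n ≤ P.rank + (1 - P).rank := by
      have := rank_add_le_aux P (1 - P)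
      simpa using this
    omega
  · intro a b ha hb μ hμ hμ0
    obtain ⟨v, hv, hMv⟩ := specvec _ _ hμ
    set M := S * ((1 - P) * S) with hMdef
    set y := ((1 - P) * S) *ᵥ v with hydef
    have hM1 : ((1 - P) * S)ᵀ * ((1 - P) * S) = M := by
      rw [transpose_mul, hQsym, hSsym, hMdef]
      calc S * (1 - P) * ((1 - P) * S) = S * (((1 - P) * (1 - P)) * S) := by
            simp only [mul_assoc]
        _ = S * ((1 - P) * S) := by rw [hQQ]
    have hM2 : ((1 - P) * S)ᵀ * (R * ((1 - P) * S)) = M * M := by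
      rw [transpose_mul, hQsym, hSsym, hMdef, ← hSS]
      simp only [mul_assoc]
    have hvv : 0 < v ⬝ᵥ v :=
      lt_of_le_of_ne (dot_self_nonneg v) fun h => hv (dotProduct_self_eq_zero.1 h.symm)
    have h2 : y ⬝ᵥ y = μ * (v ⬝ᵥ v) := by
      rw [hydef, dot2, hM1, hMv]
      simp [smul_eq_mul]
    have h3 : y ⬝ᵥ (R *ᵥ y) = μ * (μ * (v ⬝ᵥ v)) := by
      rw [hydef, mulVec_mulVec, dot2, hM2, ← mulVec_mulVec, hMv, Matrix.mulVec_smul, hMv]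
      simp [smul_eq_mul]
    have hμpos : 0 < μ := by
      have hy0 := dot_self_nonneg y
      rw [h2] at hy0
      have hμnn : 0 ≤ μ := by nlinarith
      exact lt_of_le_of_ne hμnn (Ne.symm hμ0)
    have hay := ha.dotProduct_mulVec_nonneg y
    have hby := hb.dotProduct_mulVec_nonneg y
    simp only [star_trivial, Matrix.sub_mulVec, Matrix.smul_mulVec, Matrix.one_mulVec,
      dotProduct_sub, dotProduct_smul, smul_eq_mul] at hay hby
    rw [h2, h3] at hay hby
    have hc : 0 < μ * (v ⬝ᵥ v) := mul_pos hμpos hvv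
    constructor
    · have key : a * (μ * (v ⬝ᵥ v)) ≤ μ * (μ * (v ⬝ᵥ v)) := by linarith
      exact le_of_mul_le_mul_right key hc
    · have key : μ * (μ * (v ⬝ᵥ v)) ≤ b * (μ * (v ⬝ᵥ v)) := by linarith
      exact le_of_mul_le_mul_right key hc


/-- Every nonzero eigenvalue of `R^⊥ = R − R φ̄ᵀ (φ̄ R φ̄ᵀ)⁻¹ φ̄ R` lies in
`[λ_min(R), λ_max(R)]` (expressed via any Loewner bounds `a Iₙ ⪯ R ⪯ b Iₙ`), and `R^⊥`
has exactly `n − q` nonzero eigenvalues (its rank, as a PSD matrix, is `n − q`). -/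
theorem orthogonal_part_nonzero_eigenvalue_bounds
    {n q : ℕ} (R : Matrix (Fin n) (Fin n) ℝ) (hR : R.PosDef)
    (φ : Matrix (Fin q) (Fin n) ℝ) (hφ : φ.rank = q) :
    (R - R * φᵀ * (φ * R * φᵀ)⁻¹ * φ * R).rank = n - q ∧
    ∀ a b : ℝ,
      (R - a • (1 : Matrix (Fin n) (Fin n) ℝ)).PosSemidef →
      (b • (1 : Matrix (Fin n) (Fin n) ℝ) - R).PosSemidef →
      ∀ μ ∈ spectrum ℝ (R - R * φᵀ * (φ * R * φᵀ)⁻¹ * φ * R),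
        μ ≠ 0 → a ≤ μ ∧ μ ≤ b := by
  classical
  have hSps := hR.posSemidef
  set S : Matrix (Fin n) (Fin n) ℝ := CFC.sqrt R with hSdef
  have hSS : S * S = R := CFC.sqrt_mul_sqrt_self R hSps.nonneg
  have hSsym : Sᵀ = S := by
    have h := (CFC.sqrt_nonneg R).posSemidef.isHermitian
    rwa [Matrix.IsHermitian, conjTranspose_eq_transpose_of_trivial] at h
  have hRsym : Rᵀ = R := by
    have h := hR.1
    rwa [Matrix.IsHermitian, conjTranspose_eq_transpose_of_trivial] at h
  have hSdet : IsUnit S.det := by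
    have h2 : S.det * S.det = R.det := by rw [← det_mul, hSS]
    refine isUnit_iff_ne_zero.2 fun h0 => ?_
    rw [h0, zero_mul] at h2
    exact hR.det_pos.ne' h2.symm
  have hRpos : ∀ x : Fin n → ℝ, x ≠ 0 → 0 < x ⬝ᵥ (R *ᵥ x) := fun x hx => by
    simpa using hR.dotProduct_mulVec_pos hx
  -- injectivity of φᵀ
  have hkerφT : ∀ y : Fin q → ℝ, φᵀ *ᵥ y = 0 → y = 0 := by
    have h1 := LinearMap.finrank_range_add_finrank_ker (φᵀ.mulVecLin)
    have h2 : finrank ℝ (LinearMap.range φᵀ.mulVecLin) = q := by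
      have h3 : φᵀ.rank = q := by rw [Matrix.rank_transpose, hφ]
      exact h3
    have h3 : finrank ℝ (Fin q → ℝ) = q := by simp
    have hk0 : finrank ℝ (LinearMap.ker φᵀ.mulVecLin) = 0 := by omega
    have hbot := Submodule.finrank_eq_zero.1 hk0
    intro y hy
    have hmem : y ∈ LinearMap.ker φᵀ.mulVecLin := by
      simpa [Matrix.mulVecLin_apply, Matrix.mulVec_transpose] using hy
    rw [hbot] at hmem
    simpa using hmem
  set K : Matrix (Fin q) (Fin q) ℝ := φ * R * φᵀ with hKdef
  have hKsym : Kᵀ = K := by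
    rw [hKdef, transpose_mul, transpose_mul, transpose_transpose, hRsym, Matrix.mul_assoc]
  have hKpd : K.PosDef := by
    refine Matrix.PosDef.of_dotProduct_mulVec_pos ?_ ?_
    · rw [Matrix.IsHermitian, conjTranspose_eq_transpose_of_trivial, hKsym]
    · intro y hy
      have hcalc : y ⬝ᵥ (K *ᵥ y) = (φᵀ *ᵥ y) ⬝ᵥ (R *ᵥ (φᵀ *ᵥ y)) := by
        rw [hKdef, Matrix.mul_assoc φ R φᵀ,
          ← mulVec_mulVec, dot1, ← mulVec_mulVec]
      have hne : φᵀ *ᵥ y ≠ 0 := fun h => hy (hkerφT y h)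
      simpa [hcalc] using hRpos _ hne
  have hKdetU : IsUnit K.det := isUnit_iff_ne_zero.2 hKpd.det_pos.ne'
  have hKinvK : K⁻¹ * K = 1 := nonsing_inv_mul K hKdetU
  have hKinvsym : (K⁻¹)ᵀ = K⁻¹ := by rw [transpose_nonsing_inv, hKsym]
  set P : Matrix (Fin n) (Fin n) ℝ := S * (φᵀ * (K⁻¹ * (φ * S))) with hPdef
  have hPsym : Pᵀ = P := by
    rw [hPdef]
    simp only [transpose_mul, transpose_transpose, hSsym, hKinvsym, Matrix.mul_assoc]
  have hPP : P * P = P := by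
    rw [hPdef]
    calc S * (φᵀ * (K⁻¹ * (φ * S))) * (S * (φᵀ * (K⁻¹ * (φ * S))))
        = S * (φᵀ * (K⁻¹ * (φ * (S * (S * (φᵀ * (K⁻¹ * (φ * S)))))))) := by
          simp only [Matrix.mul_assoc]
      _ = S * (φᵀ * (K⁻¹ * (φ * (R * (φᵀ * (K⁻¹ * (φ * S))))))) := by
          rw [← Matrix.mul_assoc S S _, hSS]
      _ = S * (φᵀ * (K⁻¹ * ((φ * R * φᵀ) * (K⁻¹ * (φ * S))))) := by
          simp only [Matrix.mul_assoc]
      _ = S * (φᵀ * (K⁻¹ * (K * (K⁻¹ * (φ * S))))) := by rw [← hKdef]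
      _ = S * (φᵀ * ((K⁻¹ * K) * (K⁻¹ * (φ * S)))) := by simp only [Matrix.mul_assoc]
      _ = S * (φᵀ * (K⁻¹ * (φ * S))) := by rw [hKinvK, Matrix.one_mul]
  have hM : R - R * φᵀ * (φ * R * φᵀ)⁻¹ * φ * R = S * ((1 - P) * S) := by
    rw [← hKdef, ← hSS, hPdef]
    simp only [mul_sub, sub_mul, Matrix.one_mul, Matrix.mul_one, Matrix.mul_assoc]
  have hSφ : (S * φᵀ).rank = q := by
    rw [Matrix.rank_mul_eq_right_of_isUnit_det S φᵀ hSdet, Matrix.rank_transpose, hφ]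
  have hPA : P * (S * φᵀ) = S * φᵀ := by
    rw [hPdef]
    calc S * (φᵀ * (K⁻¹ * (φ * S))) * (S * φᵀ)
        = S * (φᵀ * (K⁻¹ * (φ * (S * (S * φᵀ))))) := by simp only [Matrix.mul_assoc]
      _ = S * (φᵀ * (K⁻¹ * (φ * (R * φᵀ)))) := by rw [← Matrix.mul_assoc S S _, hSS]
      _ = S * (φᵀ * (K⁻¹ * (φ * R * φᵀ))) := by simp only [Matrix.mul_assoc]
      _ = S * (φᵀ * (K⁻¹ * K)) := by rw [← hKdef]
      _ = S * φᵀ := by rw [hKinvK, Matrix.mul_one]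
  have hPrank : P.rank = q := by
    apply le_antisymm
    · have h : P.rank ≤ (S * φᵀ).rank := by
        rw [hPdef, show S * (φᵀ * (K⁻¹ * (φ * S))) = (S * φᵀ) * (K⁻¹ * (φ * S)) from by
          simp only [Matrix.mul_assoc]]
        exact Matrix.rank_mul_le_left _ _
      rwa [hSφ] at h
    · have h := Matrix.rank_mul_le_left P (S * φᵀ)
      rwa [hPA, hSφ] at h
  obtain ⟨hrank, hspec⟩ := aux_main S P R hSsym hSdet hSS hPsym hPP
  rw [hM]
  exact ⟨by rw [hrank, hPrank], hspec⟩
end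

section
/- Let λ ∈ (0,1), ε > 0, and R₀ ∈ ℝ^{n×n} positive definite. For each k, let φ̄ₖ ∈ ℝ^{q_k×n} be a matrix all of whose singular values are ≥ √ε (possibly q_k = 0), and define R_{k+1} = Rₖ − (1−λ) Rₖ φ̄ₖᵀ (φ̄ₖ Rₖ φ̄ₖᵀ)⁻¹ φ̄ₖ Rₖ + φ̄ₖᵀ φ̄ₖ. Then for all k ≥ 0, λ_min(Rₖ) ≥ min{ε/(1−λ), λ_min(R₀)}. -/
open Matrix


section Aux
variable {n q : ℕ}

lemma psd_smul' {A : Matrix (Fin n) (Fin n) ℝ} (hA : A.PosSemidef) {c : ℝ} (hc : 0 ≤ c) :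
    (c • A).PosSemidef := by
  refine Matrix.PosSemidef.of_dotProduct_mulVec_nonneg ?_ (fun x => ?_)
  · unfold Matrix.IsHermitian
    rw [conjTranspose_smul, hA.1.eq]
    simp
  · rw [Matrix.smul_mulVec, dotProduct_smul, smul_eq_mul]
    exact mul_nonneg hc (hA.dotProduct_mulVec_nonneg x)

lemma posdef_smul' {A : Matrix (Fin n) (Fin n) ℝ} (hA : A.PosDef) {c : ℝ} (hc : 0 < c) :
    (c • A).PosDef := by
  refine posDef_iff_dotProduct_mulVec.mpr ⟨?_, fun x hx => ?_⟩
  · unfold Matrix.IsHermitian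
    rw [conjTranspose_smul, hA.1.eq]
    simp
  · rw [Matrix.smul_mulVec, dotProduct_smul, smul_eq_mul]
    exact mul_pos hc (hA.dotProduct_mulVec_pos hx)

lemma psd_sandwich {A : Matrix (Fin q) (Fin q) ℝ} (hA : A.PosSemidef)
    (B : Matrix (Fin q) (Fin n) ℝ) : (Bᵀ * A * B).PosSemidef := by
  simpa [conjTranspose_eq_transpose_of_trivial] using hA.conjTranspose_mul_mul_same B

lemma psd_tmul (B : Matrix (Fin q) (Fin n) ℝ) : (Bᵀ * B).PosSemidef := by
  simpa [conjTranspose_eq_transpose_of_trivial] using posSemidef_conjTranspose_mul_self B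

lemma herm_transpose {A : Matrix (Fin n) (Fin n) ℝ} (h : A.IsHermitian) : Aᵀ = A := by
  rw [← conjTranspose_eq_transpose_of_trivial, h.eq]

lemma posdef_sandwich_inj {A : Matrix (Fin q) (Fin q) ℝ} (hA : A.PosDef)
    (B : Matrix (Fin q) (Fin n) ℝ) (hB : ∀ x : Fin n → ℝ, x ≠ 0 → B *ᵥ x ≠ 0) :
    (Bᵀ * A * B).PosDef := by
  refine posDef_iff_dotProduct_mulVec.mpr ⟨?_, ?_⟩
  · have := isHermitian_conjTranspose_mul_mul B hA.1
    simpa [conjTranspose_eq_transpose_of_trivial] using this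
  · intro x hx
    have h := hA.dotProduct_mulVec_pos (hB x hx)
    simpa only [star_mulVec, dotProduct_mulVec, vecMul_vecMul,
      conjTranspose_eq_transpose_of_trivial, Matrix.mul_assoc] using h

lemma psd_one_sub_smul_inv {G : Matrix (Fin q) (Fin q) ℝ} (hG : G.PosDef) {ε : ℝ}
    (h : (G - ε • 1).PosSemidef) : ((1 : Matrix (Fin q) (Fin q) ℝ) - ε • G⁻¹).PosSemidef := by
  have hdet : IsUnit G.det := isUnit_iff_ne_zero.mpr hG.det_pos.ne'
  have hGG : G * G⁻¹ = 1 := Matrix.mul_nonsing_inv G hdet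
  have hGG' : G⁻¹ * G = 1 := Matrix.nonsing_inv_mul G hdet
  set W := (open scoped MatrixOrder in CFC.sqrt G) with hWdef
  have hW : W * W = G := by open scoped MatrixOrder in exact CFC.sqrt_mul_sqrt_self G hG.posSemidef.nonneg
  have hWsym : Wᵀ = W := herm_transpose (by open scoped MatrixOrder in exact (CFC.sqrt_nonneg G).posSemidef.1)
  have hWG : W * G = G * W := by rw [← hW, Matrix.mul_assoc]
  have hWGinv : G⁻¹ * W = W * G⁻¹ := by
    have h1 : G⁻¹ * (W * G) * G⁻¹ = G⁻¹ * (G * W) * G⁻¹ := by rw [hWG]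
    calc G⁻¹ * W = G⁻¹ * W * (G * G⁻¹) := by rw [hGG, Matrix.mul_one]
      _ = G⁻¹ * (W * G) * G⁻¹ := by simp only [Matrix.mul_assoc]
      _ = G⁻¹ * (G * W) * G⁻¹ := h1
      _ = (G⁻¹ * G) * (W * G⁻¹) := by simp only [Matrix.mul_assoc]
      _ = W * G⁻¹ := by rw [hGG', Matrix.one_mul]
  set V := W * G⁻¹ with hVdef
  have key : Vᵀ * (G - ε • 1) * V = 1 - ε • G⁻¹ := by
    have hVT : Vᵀ = G⁻¹ * W := by
      rw [hVdef, Matrix.transpose_mul, hWsym, Matrix.transpose_nonsing_inv,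
        herm_transpose hG.1]
    rw [hVT, hVdef]
    have e1 : (G⁻¹ * W) * (G - ε • 1) * (W * G⁻¹)
        = G⁻¹ * (W * (G * (W * G⁻¹))) - ε • (G⁻¹ * (W * (W * G⁻¹))) := by
      simp only [Matrix.mul_sub, Matrix.sub_mul, Matrix.mul_one, Matrix.one_mul,
        Matrix.mul_smul, Matrix.smul_mul, Matrix.mul_assoc]
    rw [e1]
    have e2 : W * (G * (W * G⁻¹)) = G := by
      calc W * (G * (W * G⁻¹)) = (W * G) * (W * G⁻¹) := by simp only [Matrix.mul_assoc]
        _ = (G * W) * (W * G⁻¹) := by rw [hWG]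
        _ = G * ((W * W) * G⁻¹) := by simp only [Matrix.mul_assoc]
        _ = G * (G * G⁻¹) := by rw [hW]
        _ = G := by rw [hGG, Matrix.mul_one]
    have e3 : W * (W * G⁻¹) = G * G⁻¹ := by rw [← Matrix.mul_assoc, hW]
    rw [e2, e3, hGG', hGG, Matrix.mul_one]
  rw [← key]
  exact psd_sandwich h V

lemma sift_step {qk : ℕ} {lam ε mv : ℝ} (hlam0 : 0 < lam) (hlam1 : lam < 1) (hε : 0 < ε)
    (hmε : (1 - lam) * mv ≤ ε)
    (φ : Matrix (Fin qk) (Fin n) ℝ)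
    (hφ : (φ * φᵀ - ε • (1 : Matrix (Fin qk) (Fin qk) ℝ)).PosSemidef)
    (R : Matrix (Fin n) (Fin n) ℝ) (hR : R.PosDef) :
    (R - (1 - lam) • (R * φᵀ * (φ * R * φᵀ)⁻¹ * φ * R) + φᵀ * φ).PosDef ∧
    ((R - mv • 1).PosSemidef →
      (R - (1 - lam) • (R * φᵀ * (φ * R * φᵀ)⁻¹ * φ * R) + φᵀ * φ
        - mv • (1 : Matrix (Fin n) (Fin n) ℝ)).PosSemidef) := by
  have hRsym : Rᵀ = R := herm_transpose hR.1
  -- G := φ * φᵀ is positive definite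
  have hG : (φ * φᵀ).PosDef := by
    have h1 : φ * φᵀ = (φ * φᵀ - ε • 1) + ε • 1 := by abel
    rw [h1]
    exact Matrix.PosDef.posSemidef_add hφ (posdef_smul' Matrix.PosDef.one hε)
  have hGdet : IsUnit (φ * φᵀ).det := isUnit_iff_ne_zero.mpr hG.det_pos.ne'
  have hGG : (φ * φᵀ) * (φ * φᵀ)⁻¹ = 1 := Matrix.mul_nonsing_inv _ hGdet
  have hGG' : (φ * φᵀ)⁻¹ * (φ * φᵀ) = 1 := Matrix.nonsing_inv_mul _ hGdet
  have hGinvsym : ((φ * φᵀ)⁻¹)ᵀ = (φ * φᵀ)⁻¹ := by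
    rw [Matrix.transpose_nonsing_inv, herm_transpose hG.1]
  -- φᵀ is injective
  have hinj : ∀ x : Fin qk → ℝ, x ≠ 0 → φᵀ *ᵥ x ≠ 0 := by
    intro x hx h0
    apply hx
    have h1 : (φ * φᵀ) *ᵥ x = 0 := by
      rw [← Matrix.mulVec_mulVec, h0, Matrix.mulVec_zero]
    have h2 : ((φ * φᵀ)⁻¹ * (φ * φᵀ)) *ᵥ x = 0 := by
      rw [← Matrix.mulVec_mulVec, h1, Matrix.mulVec_zero]
    rwa [hGG', Matrix.one_mulVec] at h2
  -- S := φ * R * φᵀ is positive definite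
  have hS : (φ * R * φᵀ).PosDef := by
    have h := posdef_sandwich_inj hR φᵀ hinj
    rwa [Matrix.transpose_transpose] at h
  have hSdet : IsUnit (φ * R * φᵀ).det := isUnit_iff_ne_zero.mpr hS.det_pos.ne'
  have hSsym : (φ * R * φᵀ)ᵀ = φ * R * φᵀ := herm_transpose hS.1
  set S : Matrix (Fin qk) (Fin qk) ℝ := φ * R * φᵀ with hSdef
  have hTsym : (S⁻¹)ᵀ = S⁻¹ := by
    rw [Matrix.transpose_nonsing_inv, hSsym]
  set C : Matrix (Fin n) (Fin n) ℝ := 1 - φᵀ * S⁻¹ * φ * R with hCdef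
  have hCT : Cᵀ = 1 - R * (φᵀ * (S⁻¹ * φ)) := by
    rw [hCdef]
    simp only [Matrix.transpose_sub, Matrix.transpose_one, Matrix.transpose_mul,
      Matrix.transpose_transpose, hTsym, hRsym, Matrix.mul_assoc]
  have hfold : ∀ Z : Matrix (Fin qk) (Fin n) ℝ, φ * (R * (φᵀ * Z)) = S * Z := by
    intro Z; rw [hSdef]; simp only [Matrix.mul_assoc]
  have hcan : ∀ Z : Matrix (Fin qk) (Fin n) ℝ,
      S⁻¹ * (S * Z) = Z := by
    intro Z; rw [← Matrix.mul_assoc, Matrix.nonsing_inv_mul _ hSdet, Matrix.one_mul]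
  have hCRC : Cᵀ * R * C = R - R * φᵀ * S⁻¹ * φ * R := by
    rw [hCT, hCdef]
    simp only [Matrix.sub_mul, Matrix.mul_sub, Matrix.one_mul, Matrix.mul_one,
      Matrix.mul_assoc]
    rw [hfold, hcan]
    abel
  have hkey : R - (1 - lam) • (R * φᵀ * S⁻¹ * φ * R) + φᵀ * φ
      = lam • R + (1 - lam) • (Cᵀ * R * C) + φᵀ * φ := by
    rw [hCRC]; module
  have hPD : (R - (1 - lam) • (R * φᵀ * S⁻¹ * φ * R) + φᵀ * φ).PosDef := by
    rw [hkey]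
    exact ((posdef_smul' hR hlam0).add_posSemidef
      (psd_smul' (psd_sandwich hR.posSemidef C) (by linarith))).add_posSemidef (psd_tmul φ)
  refine ⟨hPD, fun hRm => ?_⟩
  rcases le_or_gt mv 0 with hmv | hmv
  · have heq : R - (1 - lam) • (R * φᵀ * (φ * R * φᵀ)⁻¹ * φ * R) + φᵀ * φ - mv • 1
        = (R - (1 - lam) • (R * φᵀ * S⁻¹ * φ * R) + φᵀ * φ) + (-mv) • 1 := by
      module
    rw [heq]
    exact hPD.posSemidef.add (psd_smul' Matrix.PosSemidef.one (by linarith))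
  · -- 0 < mv
    set Pm : Matrix (Fin n) (Fin n) ℝ := φᵀ * (φ * φᵀ)⁻¹ * φ with hPmdef
    have hPsym : Pmᵀ = Pm := by
      rw [hPmdef]
      simp only [Matrix.transpose_mul, Matrix.transpose_transpose, hGinvsym,
        Matrix.mul_assoc]
    have hPphiT : Pm * φᵀ = φᵀ := by
      rw [hPmdef]
      simp only [Matrix.mul_assoc]
      rw [hGG', Matrix.mul_one]
    have h0 : ((1 : Matrix (Fin n) (Fin n) ℝ) - Pm) * φᵀ = 0 := by
      rw [Matrix.sub_mul, Matrix.one_mul, hPphiT, sub_self]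
    have hIC : ((1 : Matrix (Fin n) (Fin n) ℝ) - Pm) * C = 1 - Pm := by
      rw [hCdef]
      calc (1 - Pm) * (1 - φᵀ * (φ * R * φᵀ)⁻¹ * φ * R)
          = (1 - Pm) - ((1 - Pm) * φᵀ) * ((φ * R * φᵀ)⁻¹ * (φ * R)) := by
            simp only [Matrix.mul_sub, Matrix.mul_one, Matrix.mul_assoc]
        _ = 1 - Pm := by rw [h0, Matrix.zero_mul, sub_zero]
    have h1PT : ((1 : Matrix (Fin n) (Fin n) ℝ) - Pm)ᵀ = 1 - Pm := by
      rw [Matrix.transpose_sub, Matrix.transpose_one, hPsym]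
    have hCt1P : Cᵀ * (1 - Pm) = 1 - Pm := by
      calc Cᵀ * (1 - Pm) = ((1 - Pm)ᵀ * C)ᵀ := by
            rw [Matrix.transpose_mul, Matrix.transpose_transpose]
        _ = 1 - Pm := by rw [h1PT, hIC, h1PT]
    have hC1C : Cᵀ * (1 - Pm) * C = 1 - Pm := by rw [hCt1P, hIC]
    have hCC : Cᵀ * C = Cᵀ * Pm * C + (1 - Pm) := by
      have h2 : Cᵀ * (1 - Pm) * C = Cᵀ * C - Cᵀ * Pm * C := by
        simp only [Matrix.mul_sub, Matrix.sub_mul, Matrix.mul_one, Matrix.mul_assoc]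
      rw [h2] at hC1C
      rw [← hC1C]; abel
    have e1 : Cᵀ * (R - mv • 1) * C
        = (R - R * φᵀ * S⁻¹ * φ * R) - mv • (Cᵀ * Pm * C) - mv • (1 - Pm) := by
      have expand : Cᵀ * (R - mv • 1) * C = Cᵀ * R * C - mv • (Cᵀ * C) := by
        simp only [Matrix.mul_sub, Matrix.sub_mul, Matrix.mul_one, Matrix.mul_smul,
          Matrix.smul_mul, Matrix.mul_assoc]
      rw [expand, hCRC, hCC]; module
    have hPmPSD : Pm.PosSemidef := psd_sandwich hG.inv.posSemidef φ
    have hsub : (φᵀ * φ - ε • Pm).PosSemidef := by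
      have h1 : ((1 : Matrix (Fin qk) (Fin qk) ℝ) - ε • (φ * φᵀ)⁻¹).PosSemidef :=
        psd_one_sub_smul_inv hG hφ
      have h2 := psd_sandwich h1 φ
      have e : φᵀ * (1 - ε • (φ * φᵀ)⁻¹) * φ = φᵀ * φ - ε • Pm := by
        rw [hPmdef]
        simp only [Matrix.mul_sub, Matrix.sub_mul, Matrix.mul_one, Matrix.one_mul,
          Matrix.mul_smul, Matrix.smul_mul, Matrix.mul_assoc]
      rwa [e] at h2
    have hc1 : (0:ℝ) ≤ (1 - lam) * mv := by nlinarith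
    have hc2 : (0:ℝ) ≤ ε - (1 - lam) * mv := by linarith
    have main : R - (1 - lam) • (R * φᵀ * (φ * R * φᵀ)⁻¹ * φ * R) + φᵀ * φ - mv • 1
        = lam • (R - mv • 1) + ((1 - lam) • (Cᵀ * (R - mv • 1) * C)
          + (((1 - lam) * mv) • (Cᵀ * Pm * C)
          + ((φᵀ * φ - ε • Pm) + (ε - (1 - lam) * mv) • Pm))) := by
      rw [e1]; module
    rw [main]
    exact (psd_smul' hRm hlam0.le).add ((psd_smul' (psd_sandwich hRm C) (by linarith)).add
      ((psd_smul' (psd_sandwich hPmPSD C) hc1).add (hsub.add (psd_smul' hPmPSD hc2))))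

end Aux

/-- SIFt-RLS lower covariance bound: if every filtered regressor `φ̄ₖ ∈ ℝ^{q_k×n}` has all
singular values `≥ √ε` (encoded as `ε I ⪯ φ̄ₖ φ̄ₖᵀ`), then
`λ_min(Rₖ) ≥ min {ε/(1−λ), λ_min(R₀)}`, expressed in the Loewner order: for every `a`
with `a Iₙ ⪯ R₀` we have `min (ε/(1−λ)) a • Iₙ ⪯ Rₖ`. -/
theorem sift_rls_information_lower_bound
    {n : ℕ} (lam : ℝ) (hlam : lam ∈ Set.Ioo (0:ℝ) 1)
    (ε : ℝ) (hε : 0 < ε)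
    (q : ℕ → ℕ) (φ : (k : ℕ) → Matrix (Fin (q k)) (Fin n) ℝ)
    (hφ : ∀ k, (φ k * (φ k)ᵀ - ε • (1 : Matrix (Fin (q k)) (Fin (q k)) ℝ)).PosSemidef)
    (R : ℕ → Matrix (Fin n) (Fin n) ℝ) (hR0 : (R 0).PosDef)
    (hrec : ∀ k, R (k + 1) =
      R k - (1 - lam) • (R k * (φ k)ᵀ * (φ k * R k * (φ k)ᵀ)⁻¹ * φ k * R k)
        + (φ k)ᵀ * φ k) :
    ∀ a : ℝ, (R 0 - a • (1 : Matrix (Fin n) (Fin n) ℝ)).PosSemidef →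
      ∀ k, (R k - min (ε / (1 - lam)) a • (1 : Matrix (Fin n) (Fin n) ℝ)).PosSemidef := by
  intro a ha k
  obtain ⟨hlam0, hlam1⟩ := hlam
  set mv := min (ε / (1 - lam)) a with hmv
  have h2 : (0:ℝ) < 1 - lam := by linarith
  have hmε : (1 - lam) * mv ≤ ε := by
    have h1 : mv ≤ ε / (1 - lam) := min_le_left _ _
    calc (1 - lam) * mv ≤ (1 - lam) * (ε / (1 - lam)) := by nlinarith
      _ = ε := by field_simp
  have hind : ∀ k, (R k).PosDef ∧ (R k - mv • 1).PosSemidef := by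
    intro k
    induction k with
    | zero =>
      refine ⟨hR0, ?_⟩
      have hma : mv ≤ a := min_le_right _ _
      have heq : R 0 - mv • (1 : Matrix (Fin n) (Fin n) ℝ)
          = (R 0 - a • 1) + (a - mv) • 1 := by module
      rw [heq]
      exact ha.add (psd_smul' Matrix.PosSemidef.one (by linarith))
    | succ k ih =>
      have hs := sift_step hlam0 hlam1 hε hmε (φ k) (hφ k) (R k) ih.1
      rw [hrec k]
      exact ⟨hs.1, hs.2 ih.2⟩
  exact (hind k).2
end

section
/- Let λ ∈ (0,1) and ε > 0. Define R₀ = diag(ε², 1) ∈ ℝ^{2×2} and, for all k ≥ 0, Rₖ₊₁ = λRₖ + diag(ε², λ^{k+1}). Then for all k ≥ 0, Rₖ = diag(ε² ∑_{i=0}^{k} λⁱ, (k+1)λᵏ) (with R₀ as given), and Rₖ converges to diag(ε²/(1−λ), 0) as k → ∞; in particular there is no γ > 0 with λ_min(Rₖ) ≥ γ for all k. -/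
open Matrix Filter

/-- Counterexample for the scheme of Zhu et al.: with `R₀ = diag(ε², 1)` and
`R_{k+1} = λ Rₖ + diag(ε², λ^{k+1})`, one has
`Rₖ = diag(ε² ∑_{i=0}^{k} λⁱ, (k+1) λᵏ)` for all `k`, `Rₖ → diag(ε²/(1−λ), 0)`, and there
is no uniform lower bound `γ > 0` with `λ_min(Rₖ) ≥ γ` for all `k`. -/
theorem zhu_counterexample
    (lam : ℝ) (hlam : lam ∈ Set.Ioo (0:ℝ) 1)
    (ε : ℝ) (hε : 0 < ε)
    (R : ℕ → Matrix (Fin 2) (Fin 2) ℝ)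
    (hR0 : R 0 = Matrix.diagonal ![ε ^ 2, 1])
    (hrec : ∀ k, R (k + 1) = lam • R k + Matrix.diagonal ![ε ^ 2, lam ^ (k + 1)]) :
    (∀ k, R k = Matrix.diagonal
      ![ε ^ 2 * ∑ i ∈ Finset.range (k + 1), lam ^ i, (k + 1 : ℝ) * lam ^ k]) ∧
    Tendsto R atTop (nhds (Matrix.diagonal ![ε ^ 2 / (1 - lam), 0])) ∧
    ¬ ∃ γ : ℝ, 0 < γ ∧ ∀ k,
      (R k - γ • (1 : Matrix (Fin 2) (Fin 2) ℝ)).PosSemidef := by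
  obtain ⟨hlam0, hlam1⟩ := hlam
  -- explicit formula
  have hform : ∀ k, R k = Matrix.diagonal
      ![ε ^ 2 * ∑ i ∈ Finset.range (k + 1), lam ^ i, (k + 1 : ℝ) * lam ^ k] := by
    intro k
    induction k with
    | zero => simpa using hR0
    | succ n ih =>
      rw [hrec n, ih]
      ext i j
      fin_cases i <;> fin_cases j <;> simp [Matrix.diagonal]
      · rw [geom_sum_succ (n := n + 1)]; ring
      · push_cast; ring
  refine ⟨hform, ?_, ?_⟩
  · -- convergence
    have hb : Tendsto (fun k : ℕ => ((k : ℝ) + 1) * lam ^ k) atTop (nhds 0) := by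
      have h1 : Tendsto (fun k : ℕ => (k : ℝ) * lam ^ k) atTop (nhds 0) :=
        tendsto_self_mul_const_pow_of_lt_one hlam0.le hlam1
      have h2 : Tendsto (fun k : ℕ => lam ^ k) atTop (nhds 0) :=
        tendsto_pow_atTop_nhds_zero_of_lt_one hlam0.le hlam1
      have := h1.add h2
      simpa [add_mul] using this
    have ha : Tendsto (fun k : ℕ => ε ^ 2 * ∑ i ∈ Finset.range (k + 1), lam ^ i) atTop
        (nhds (ε ^ 2 / (1 - lam))) := by
      have hs : Tendsto (fun n : ℕ => ∑ i ∈ Finset.range n, lam ^ i) atTop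
          (nhds (1 - lam)⁻¹) :=
        (hasSum_geometric_of_lt_one hlam0.le hlam1).tendsto_sum_nat
      have hs' : Tendsto (fun k : ℕ => ∑ i ∈ Finset.range (k + 1), lam ^ i) atTop
          (nhds (1 - lam)⁻¹) := hs.comp (tendsto_add_atTop_nat 1)
      simpa [div_eq_mul_inv] using hs'.const_mul (ε ^ 2)
    refine tendsto_pi_nhds.mpr ?_
    intro i
    rw [tendsto_pi_nhds]
    intro j
    have : ∀ k, R k i j = Matrix.diagonal
        ![ε ^ 2 * ∑ i ∈ Finset.range (k + 1), lam ^ i, (k + 1 : ℝ) * lam ^ k] i j := by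
      intro k; rw [hform k]
    simp only [funext this]
    fin_cases i <;> fin_cases j <;> simp [Matrix.diagonal] <;>
      first
        | exact ha
        | exact hb
        | exact tendsto_const_nhds
  · -- no uniform lower bound
    rintro ⟨γ, hγ, hpsd⟩
    have key : ∀ k : ℕ, γ ≤ ((k : ℝ) + 1) * lam ^ k := by
      intro k
      have h := (hpsd k).dotProduct_mulVec_nonneg (Pi.single (1 : Fin 2) 1)
      rw [hform k] at h
      have : (0:ℝ) ≤ ((k : ℝ) + 1) * lam ^ k - γ := by
        simpa [dotProduct, Matrix.mulVec, Fin.sum_univ_two, Pi.single,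
          Matrix.diagonal, Matrix.one_apply, Function.update] using h
      linarith
    have hb : Tendsto (fun k : ℕ => ((k : ℝ) + 1) * lam ^ k) atTop (nhds 0) := by
      have h1 : Tendsto (fun k : ℕ => (k : ℝ) * lam ^ k) atTop (nhds 0) :=
        tendsto_self_mul_const_pow_of_lt_one hlam0.le hlam1
      have h2 : Tendsto (fun k : ℕ => lam ^ k) atTop (nhds 0) :=
        tendsto_pow_atTop_nhds_zero_of_lt_one hlam0.le hlam1
      have := h1.add h2
      simpa [add_mul] using this
    have : γ ≤ 0 := ge_of_tendsto' hb key
    linarith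
end
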